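/- Let X be infinitely divisible on the non-negative integers with integer-valued components, and suppose P(X = 0) > 0 and P(X = 1) > 0. Then P(X = m) > 0 for every non-negative integer m; i.e., the support of X has no gaps. -/
import Mathlib


open scoped ENNReal

noncomputable def pmfConv (p q : PMF ℕ) : PMF ℕ :=
  p.bind fun a => q.map fun b => a + b

noncomputable def pmfConvPow (p : PMF ℕ) : ℕ → PMF ℕ
  | 0 => PMF.pure 0
  | n + 1 => pmfConv p (pmfConvPow p n)

/-- The probability generating function `Q(s) = E[s^X]` of a pmf on ℕ. -/
noncomputable def pgf (X : PMF ℕ) (s : ℝ) : ℝ :=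
  ∑' k : ℕ, (X k).toReal * s ^ k

lemma conv_le (p q : PMF ℕ) (a b : ℕ) : p a * q b ≤ pmfConv p q (a + b) := by
  rw [pmfConv, PMF.bind_apply]
  refine le_trans ?_ (ENNReal.le_tsum a)
  apply mul_le_mul_right
  rw [PMF.map_apply]
  refine le_trans ?_ (ENNReal.le_tsum b)
  simp

lemma conv_pos_elim (p q : PMF ℕ) (k : ℕ) (h : 0 < pmfConv p q k) :
    ∃ a b, a + b = k ∧ 0 < p a ∧ 0 < q b := by
  have hk : k ∈ (pmfConv p q).support := by
    rw [PMF.mem_support_iff]; exact h.ne'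
  rw [pmfConv, PMF.support_bind] at hk
  obtain ⟨a, ha, hk⟩ := Set.mem_iUnion₂.1 hk
  rw [PMF.support_map] at hk
  obtain ⟨b, hb, rfl⟩ := hk
  exact ⟨a, b, rfl, pos_iff_ne_zero.2 ((PMF.mem_support_iff _ _).1 ha),
    pos_iff_ne_zero.2 ((PMF.mem_support_iff _ _).1 hb)⟩

lemma pow_pos_of_le (ν : PMF ℕ) (h0 : 0 < ν 0) (h1 : 0 < ν 1) :
    ∀ n m : ℕ, m ≤ n → 0 < pmfConvPow ν n m := by
  intro n
  induction n with
  | zero =>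
    intro m hm
    interval_cases m
    simp [pmfConvPow]
  | succ n ih =>
    intro m hm
    match m with
    | 0 =>
      have h := ih 0 (Nat.zero_le _)
      calc (0 : ℝ≥0∞) < ν 0 * pmfConvPow ν n 0 := ENNReal.mul_pos h0.ne' h.ne'
        _ ≤ pmfConvPow ν (n + 1) 0 := conv_le ν (pmfConvPow ν n) 0 0
    | m + 1 =>
      have h := ih m (Nat.succ_le_succ_iff.1 hm)
      calc (0 : ℝ≥0∞) < ν 1 * pmfConvPow ν n m := ENNReal.mul_pos h1.ne' h.ne'
        _ ≤ pmfConvPow ν (n + 1) (1 + m) := conv_le ν (pmfConvPow ν n) 1 m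
        _ = pmfConvPow ν (n + 1) (m + 1) := by rw [Nat.add_comm 1 m]

lemma nu_zero_pos (ν : PMF ℕ) (n : ℕ) (h : 0 < pmfConvPow ν (n + 1) 0) : 0 < ν 0 := by
  obtain ⟨a, b, hab, ha, hb⟩ := conv_pos_elim _ _ _ h
  obtain ⟨rfl, rfl⟩ := Nat.add_eq_zero.1 hab
  exact ha

lemma nu_one_pos (ν : PMF ℕ) : ∀ n : ℕ, 0 < pmfConvPow ν n 1 → 0 < ν 1 := by
  intro n
  induction n with
  | zero =>
    intro h
    simp [pmfConvPow, PMF.pure_apply] at h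
  | succ n ih =>
    intro h
    obtain ⟨a, b, hab, ha, hb⟩ := conv_pos_elim _ _ _ h
    rcases Nat.add_eq_one_iff.1 hab with ⟨rfl, rfl⟩ | ⟨rfl, rfl⟩
    · exact ih hb
    · exact ha

/-- **Remark 1.** Let `X` be infinitely divisible on the non-negative integers with
integer-valued components, and suppose `P(X = 0) > 0` and `P(X = 1) > 0`. Then
`P(X = m) > 0` for every non-negative integer `m`: the support of `X` has no gaps. -/
theorem no_gaps_of_infdiv_integer_components_of_mass_at_zero_and_one
    (X : PMF ℕ)
    (hID : ∀ n : ℕ, 1 ≤ n → ∃ ν : PMF ℕ, pmfConvPow ν n = X)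
    (h0 : 0 < X 0) (h1 : 0 < X 1) :
    ∀ m : ℕ, 0 < X m := by
  intro m
  obtain ⟨ν, hν⟩ := hID (max m 1) (le_max_right _ _)
  obtain ⟨n, hmax⟩ : ∃ n, max m 1 = n + 1 := ⟨max m 1 - 1, by omega⟩
  have hX0 : 0 < pmfConvPow ν (max m 1) 0 := by rw [hν]; exact h0
  have hX1 : 0 < pmfConvPow ν (max m 1) 1 := by rw [hν]; exact h1
  have hν0 : 0 < ν 0 := nu_zero_pos ν n (by rwa [hmax] at hX0)
  have hν1 : 0 < ν 1 := nu_one_pos ν _ hX1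
  rw [← hν]
  exact pow_pos_of_le ν hν0 hν1 _ m (le_max_left _ _)
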